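/- arXiv:2209.02144 — 2 statements merged into one kernel-verified Lean document; each statement's English description precedes it below -/
import Mathlib

section
/- Under the hypotheses of the pathwise comparison lemma, if additionally E[sup_{0≤t≤T}|G(t)|] < ∞ (G a stochastic process with a.s. continuous paths), then sup_{0≤t≤T} E|X(t) − x(t)| ≤ ε·e^{L T}·E[sup_{0≤t≤T}|G(t)|]. -/
open Set MeasureTheory

/-- Integral form of Grönwall's inequality on `[0, T]`. -/
lemma gronwall_integral_form {T L C : ℝ} (hT : 0 ≤ T) (hL : 0 ≤ L) (hC : 0 ≤ C)
    {Z : ℝ → ℝ} (hZ : ContinuousOn Z (Icc 0 T))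
    (h : ∀ t ∈ Icc (0:ℝ) T, |Z t| ≤ L * (∫ v in (0:ℝ)..t, |Z v|) + C) :
    ∀ t ∈ Icc (0:ℝ) T, |Z t| ≤ C * Real.exp (L * T) := by
  have hZa : ContinuousOn (fun v => |Z v|) (Icc 0 T) := hZ.abs
  set g : ℝ → ℝ := fun u => ∫ v in (0:ℝ)..u, |Z v| with hg
  have hint : IntegrableOn (fun v => |Z v|) (uIcc 0 T) volume := by
    rw [uIcc_of_le hT]; exact hZa.integrableOn_Icc
  have hgc : ContinuousOn g (Icc 0 T) := by
    have := intervalIntegral.continuousOn_primitive_interval (a := (0:ℝ)) (b := T) hint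
    rwa [uIcc_of_le hT] at this
  have hgd : ∀ u ∈ Ico (0:ℝ) T, HasDerivWithinAt g (|Z u|) (Ici u) u := by
    intro u hu
    have hmem : Icc (0:ℝ) T ∈ nhdsWithin u (Ioi u) := by
      rw [mem_nhdsWithin]
      exact ⟨Iio T, isOpen_Iio, hu.2, fun y hy => ⟨le_trans hu.1 (le_of_lt hy.2), le_of_lt hy.1⟩⟩
    have hii : IntervalIntegrable (fun v => |Z v|) volume 0 u := by
      apply ContinuousOn.intervalIntegrable
      rw [uIcc_of_le hu.1]
      exact hZa.mono (Icc_subset_Icc le_rfl hu.2.le)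
    refine intervalIntegral.integral_hasDerivWithinAt_right hii ⟨Icc 0 T, hmem, ?_⟩ ?_
    · exact (hZa.aestronglyMeasurable measurableSet_Icc)
    · exact (hZa u ⟨hu.1, hu.2.le⟩).mono_of_mem_nhdsWithin hmem
  have hgnn : ∀ u ∈ Icc (0:ℝ) T, 0 ≤ g u := fun u hu =>
    intervalIntegral.integral_nonneg hu.1 (fun v _ => abs_nonneg _)
  have key : ∀ u ∈ Icc (0:ℝ) T, ‖g u‖ ≤ gronwallBound 0 L C (u - 0) := by
    apply norm_le_gronwallBound_of_norm_deriv_right_le hgc hgd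
    · simp [hg, intervalIntegral.integral_same]
    · intro u hu
      have h1 := h u ⟨hu.1, hu.2.le⟩
      rw [Real.norm_eq_abs, abs_abs, Real.norm_eq_abs,
        abs_of_nonneg (hgnn u ⟨hu.1, hu.2.le⟩)]
      exact h1
  intro t ht
  have h1 := h t ht
  have h2 := key t ht
  rw [Real.norm_eq_abs, abs_of_nonneg (hgnn t ht), sub_zero] at h2
  have h3 : L * g t + C ≤ L * gronwallBound 0 L C t + C := by nlinarith
  refine h1.trans (h3.trans ?_)
  rcases eq_or_lt_of_le hL with hL0 | hL0
  · rw [← hL0]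
    simp only [gronwallBound_K0, zero_mul, zero_add, Real.exp_zero, mul_one]
    nlinarith [Real.one_le_exp (mul_nonneg (le_refl (0:ℝ)) hT)]
  · rw [gronwallBound_of_K_ne_0 hL0.ne']
    have : L * (0 * Real.exp (L * t) + C / L * (Real.exp (L * t) - 1)) + C
        = C * Real.exp (L * t) := by field_simp; ring
    rw [this]
    have : Real.exp (L * t) ≤ Real.exp (L * T) :=
      Real.exp_le_exp.2 (by nlinarith [ht.2])
    nlinarith

/-- Lemma 2.1(b): expectation version of the pathwise comparison,
`sup_{0≤t≤T} E|X_t − x_t| ≤ ε e^{LT} E[sup_{0≤t≤T}|G_t|]`. -/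
theorem expectation_comparison
    {Ω : Type*} [MeasurableSpace Ω] (μ : Measure Ω) [IsProbabilityMeasure μ]
    (T L ε x₀ : ℝ) (hT : 0 ≤ T) (hL : 0 ≤ L) (hε : 0 ≤ ε)
    (θ : ℝ → ℝ) (G X : Ω → ℝ → ℝ) (x : ℝ → ℝ)
    (hθ_meas : Measurable θ)
    (hθ_bdd : ∀ t ∈ Icc (0:ℝ) T, |θ t| ≤ L)
    (hG_cont : ∀ᵐ ω ∂μ, ContinuousOn (G ω) (Icc 0 T))
    (hG0 : ∀ᵐ ω ∂μ, G ω 0 = 0)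
    (hX_cont : ∀ᵐ ω ∂μ, ContinuousOn (X ω) (Icc 0 T))
    (hx_cont : ContinuousOn x (Icc 0 T))
    (hX : ∀ᵐ ω ∂μ, ∀ t ∈ Icc (0:ℝ) T,
      X ω t = x₀ + (∫ v in (0:ℝ)..t, θ v * X ω v) + ε * G ω t)
    (hx : ∀ t ∈ Icc (0:ℝ) T, x t = x₀ + ∫ v in (0:ℝ)..t, θ v * x v)
    (hG_int : Integrable (fun ω => ⨆ t : Icc (0:ℝ) T, |G ω t|) μ)
    (hXx_int : ∀ t ∈ Icc (0:ℝ) T, Integrable (fun ω => |X ω t - x t|) μ) :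
    ∀ t ∈ Icc (0:ℝ) T,
      (∫ ω, |X ω t - x t| ∂μ)
        ≤ ε * Real.exp (L * T) * ∫ ω, (⨆ t : Icc (0:ℝ) T, |G ω t|) ∂μ := by
  -- interval integrability of `θ • f` for `f` continuous on `[0, T]`
  have hint : ∀ (f : ℝ → ℝ), ContinuousOn f (Icc 0 T) → ∀ s ∈ Icc (0:ℝ) T,
      IntervalIntegrable (fun v => θ v * f v) volume 0 s := by
    intro f hf s hs
    rw [intervalIntegrable_iff, uIoc_of_le hs.1]
    refine IntegrableOn.mono_set (t := Icc 0 T) ?_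
      (Ioc_subset_Icc_self.trans (Icc_subset_Icc le_rfl hs.2))
    obtain ⟨M, hM⟩ := isCompact_Icc.exists_bound_of_continuousOn hf
    refine ⟨(hθ_meas.aestronglyMeasurable.restrict).mul
      (hf.aestronglyMeasurable measurableSet_Icc), ?_⟩
    refine HasFiniteIntegral.restrict_of_bounded (C := L * M)
      (measure_Icc_lt_top) ?_
    refine (ae_restrict_iff' measurableSet_Icc).2 (ae_of_all _ fun v hv => ?_)
    rw [Real.norm_eq_abs, abs_mul]
    have h0 : (0:ℝ) ≤ M := le_trans (norm_nonneg _) (hM 0 ⟨le_rfl, hT⟩)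
    have h1 := hθ_bdd v hv
    have h2 := hM v hv
    rw [Real.norm_eq_abs] at h2
    exact mul_le_mul h1 h2 (abs_nonneg _) hL
  intro t ht
  -- pathwise bound, almost everywhere
  have hptwise : ∀ᵐ ω ∂μ, |X ω t - x t|
      ≤ ε * Real.exp (L * T) * ⨆ s : Icc (0:ℝ) T, |G ω s| := by
    filter_upwards [hG_cont, hG0, hX_cont, hX] with ω hGc hG0ω hXc hXω
    set S : ℝ := ⨆ s : Icc (0:ℝ) T, |G ω s| with hS
    have hB : BddAbove (range fun s : Icc (0:ℝ) T => |G ω s|) := by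
      obtain ⟨M, hM⟩ := (isCompact_Icc.image_of_continuousOn hGc.abs).bddAbove
      exact ⟨M, by rintro y ⟨⟨s, hs⟩, rfl⟩; exact hM ⟨s, hs, rfl⟩⟩
    have hle : ∀ s ∈ Icc (0:ℝ) T, |G ω s| ≤ S := fun s hs =>
      le_ciSup hB (⟨s, hs⟩ : Icc (0:ℝ) T)
    have hSnn : 0 ≤ S := le_trans (abs_nonneg _) (hle 0 ⟨le_rfl, hT⟩)
    set Z : ℝ → ℝ := fun v => X ω v - x v with hZ
    have hZc : ContinuousOn Z (Icc 0 T) := hXc.sub hx_cont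
    have hbound : ∀ s ∈ Icc (0:ℝ) T,
        |Z s| ≤ L * (∫ v in (0:ℝ)..s, |Z v|) + ε * S := by
      intro s hs
      have hiX := hint (X ω) hXc s hs
      have hix := hint x hx_cont s hs
      have hiZ : IntervalIntegrable (fun v => θ v * Z v) volume 0 s := by
        have h := hiX.sub hix
        simp only [hZ, mul_sub]
        exact h
      have e1 : Z s = (∫ v in (0:ℝ)..s, θ v * Z v) + ε * G ω s := by
        have e2 : (∫ v in (0:ℝ)..s, θ v * Z v)
            = (∫ v in (0:ℝ)..s, θ v * X ω v) - ∫ v in (0:ℝ)..s, θ v * x v := by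
          rw [← intervalIntegral.integral_sub hiX hix]
          simp only [hZ, mul_sub]
        rw [hZ]
        simp only [hXω s hs, hx s hs, e2]
        simp only [mul_sub]
        rw [intervalIntegral.integral_sub hiX hix]
        ring
      have hiZa : IntervalIntegrable (fun v => |Z v|) volume 0 s := by
        apply ContinuousOn.intervalIntegrable
        rw [uIcc_of_le hs.1]
        exact (hZc.abs).mono (Icc_subset_Icc le_rfl hs.2)
      calc |Z s| = |(∫ v in (0:ℝ)..s, θ v * Z v) + ε * G ω s| := by rw [e1]
        _ ≤ |∫ v in (0:ℝ)..s, θ v * Z v| + |ε * G ω s| := abs_add_le _ _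
        _ ≤ (∫ v in (0:ℝ)..s, |θ v * Z v|) + ε * S := by
            refine add_le_add (intervalIntegral.abs_integral_le_integral_abs hs.1) ?_
            rw [abs_mul, abs_of_nonneg hε]
            exact mul_le_mul_of_nonneg_left (hle s hs) hε
        _ ≤ (∫ v in (0:ℝ)..s, L * |Z v|) + ε * S := by
            refine add_le_add_left ?_ _
            refine intervalIntegral.integral_mono_on hs.1 hiZ.abs (hiZa.const_mul L) ?_
            intro v hv
            rw [abs_mul]
            exact mul_le_mul_of_nonneg_right
              (hθ_bdd v ⟨hv.1, hv.2.trans hs.2⟩) (abs_nonneg _)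
        _ = L * (∫ v in (0:ℝ)..s, |Z v|) + ε * S := by
            rw [intervalIntegral.integral_const_mul]
    have := gronwall_integral_form hT hL (mul_nonneg hε hSnn) hZc hbound t ht
    calc |X ω t - x t| = |Z t| := rfl
      _ ≤ ε * S * Real.exp (L * T) := this
      _ = ε * Real.exp (L * T) * S := by ring
  calc (∫ ω, |X ω t - x t| ∂μ)
      ≤ ∫ ω, ε * Real.exp (L * T) * ⨆ s : Icc (0:ℝ) T, |G ω s| ∂μ :=
        integral_mono_ae (hXx_int t ht) (hG_int.const_mul _) hptwise
    _ = ε * Real.exp (L * T) * ∫ ω, (⨆ t : Icc (0:ℝ) T, |G ω t|) ∂μ := by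
        rw [integral_const_mul]
end

section
/- Let K : ℝ → ℝ be bounded with support in [A,B], ∫ K = 1, and ∫ uʲ K(u) du = 0 for j = 1,…,k. Suppose J : ℝ → ℝ is k-times differentiable and its k-th derivative is Lipschitz with constant L′. Then for any t and φ > 0, |∫ K(u)·(J(t + φu) − J(t)) du| ≤ (L′/k!)·φ^{k+1}·∫ |K(u)·u^{k+1}| du. -/
open Set

open MeasureTheory
-- helper 1: integral bound
lemma my_integral_bound (r : ℝ → ℝ) (hr : Continuous r) (t x c : ℝ) (hc : 0 ≤ c) (m : ℕ)
    (hb : ∀ s, |r s| ≤ c * |s - t| ^ m) :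
    |∫ s in t..x, r s| ≤ c * |x - t| ^ (m + 1) / (m + 1) := by
  rcases le_total t x with h | h
  · have h1 : |∫ s in t..x, r s| ≤ ∫ s in t..x, |r s| :=
      intervalIntegral.abs_integral_le_integral_abs h
    have h2 : ∫ s in t..x, |r s| ≤ ∫ s in t..x, c * (s - t) ^ m := by
      apply intervalIntegral.integral_mono_on h
      · exact hr.abs.intervalIntegrable _ _
      · exact (continuous_const.mul ((continuous_id.sub continuous_const).pow m)).intervalIntegrable _ _
      · intro s hs
        calc |r s| ≤ c * |s - t| ^ m := hb s
          _ = c * (s - t) ^ m := by rw [abs_of_nonneg (sub_nonneg.2 hs.1)]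
    have h3 : ∫ s in t..x, c * (s - t) ^ m = c * ((x - t) ^ (m + 1) / (m + 1)) := by
      rw [intervalIntegral.integral_const_mul]
      congr 1
      have := intervalIntegral.integral_comp_sub_right (fun s => s ^ m) t (a := t) (b := x)
      rw [this, sub_self, integral_pow]
      simp
    calc |∫ s in t..x, r s| ≤ c * ((x - t) ^ (m + 1) / (m + 1)) := by
          rw [← h3]; exact h1.trans h2
      _ = c * |x - t| ^ (m + 1) / (m + 1) := by
          rw [abs_of_nonneg (sub_nonneg.2 h)]; ring
  · have hflip : |∫ s in t..x, r s| = |∫ s in x..t, r s| := by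
      rw [intervalIntegral.integral_symm, abs_neg]
    have h1 : |∫ s in x..t, r s| ≤ ∫ s in x..t, |r s| :=
      intervalIntegral.abs_integral_le_integral_abs h
    have h2 : ∫ s in x..t, |r s| ≤ ∫ s in x..t, c * (t - s) ^ m := by
      apply intervalIntegral.integral_mono_on h
      · exact hr.abs.intervalIntegrable _ _
      · exact (continuous_const.mul ((continuous_const.sub continuous_id).pow m)).intervalIntegrable _ _
      · intro s hs
        calc |r s| ≤ c * |s - t| ^ m := hb s
          _ = c * (t - s) ^ m := by rw [abs_sub_comm, abs_of_nonneg (sub_nonneg.2 hs.2)]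
    have h3 : ∫ s in x..t, c * (t - s) ^ m = c * ((t - x) ^ (m + 1) / (m + 1)) := by
      rw [intervalIntegral.integral_const_mul]
      congr 1
      have := intervalIntegral.integral_comp_sub_left (fun s => s ^ m) t (a := x) (b := t)
      rw [this, sub_self, integral_pow]
      simp
    calc |∫ s in t..x, r s| ≤ c * ((t - x) ^ (m + 1) / (m + 1)) := by
          rw [hflip, ← h3]; exact h1.trans h2
      _ = c * |x - t| ^ (m + 1) / (m + 1) := by
          rw [abs_sub_comm, abs_of_nonneg (sub_nonneg.2 h)]; ring

-- helper 2: Taylor with Lipschitz k-th derivative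
lemma my_taylor_lip (L : ℝ) (hL : 0 ≤ L) :
    ∀ (k : ℕ) (f : ℝ → ℝ), ContDiff ℝ k f →
    (∀ s s' : ℝ, |iteratedDeriv k f s - iteratedDeriv k f s'| ≤ L * |s - s'|) →
    ∀ t x : ℝ,
      |f x - ∑ j ∈ Finset.range (k + 1), iteratedDeriv j f t / j.factorial * (x - t) ^ j|
        ≤ L / (k + 1).factorial * |x - t| ^ (k + 1) := by
  intro k
  induction k with
  | zero =>
    intro f _ hlip t x
    simpa [iteratedDeriv_zero] using hlip x t
  | succ k ih =>
    intro f hf hlip t x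
    have hf' : Differentiable ℝ f ∧ ContDiff ℝ k (deriv f) := by
      have : ContDiff ℝ ((k : WithTop ℕ∞) + 1) f := by
        have hcast : ((k + 1 : ℕ) : WithTop ℕ∞) = (k : WithTop ℕ∞) + 1 := by push_cast; ring
        rwa [hcast] at hf
      have := contDiff_succ_iff_deriv.1 this
      exact ⟨this.1, this.2.2⟩
    set g := deriv f with hg
    have hglip : ∀ s s' : ℝ, |iteratedDeriv k g s - iteratedDeriv k g s'| ≤ L * |s - s'| := by
      intro s s'
      have : iteratedDeriv k g = iteratedDeriv (k + 1) f := (iteratedDeriv_succ' ..).symm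
      rw [this]; exact hlip s s'
    have IH := ih g hf'.2 hglip t
    -- the remainder function and its derivative
    set R : ℝ → ℝ := fun y =>
      f y - ∑ j ∈ Finset.range (k + 2), iteratedDeriv j f t / j.factorial * (y - t) ^ j with hR
    set r : ℝ → ℝ := fun y =>
      g y - ∑ i ∈ Finset.range (k + 1), iteratedDeriv i g t / i.factorial * (y - t) ^ i with hr
    have hderiv : ∀ y, HasDerivAt R (r y) y := by
      intro y
      have hsum : HasDerivAt
          (fun y => ∑ j ∈ Finset.range (k + 2), iteratedDeriv j f t / j.factorial * (y - t) ^ j)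
          (∑ j ∈ Finset.range (k + 2),
            iteratedDeriv j f t / j.factorial * (j * (y - t) ^ (j - 1))) y := by
        apply HasDerivAt.fun_sum
        intro j _
        simpa using (((hasDerivAt_id y).sub_const t).pow j).const_mul
          (iteratedDeriv j f t / j.factorial)
      have hfd : HasDerivAt f (g y) y := (hf'.1 y).hasDerivAt
      have := hfd.sub hsum
      refine this.congr_deriv ?_
      rw [hr]
      have hre : ∑ j ∈ Finset.range (k + 2),
          iteratedDeriv j f t / j.factorial * (j * (y - t) ^ (j - 1))
          = ∑ i ∈ Finset.range (k + 1), iteratedDeriv i g t / i.factorial * (y - t) ^ i := by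
        rw [Finset.sum_range_succ']
        simp only [Nat.cast_zero, zero_mul, mul_zero, add_zero]
        apply Finset.sum_congr rfl
        intro i _
        have : iteratedDeriv (i + 1) f = iteratedDeriv i g := iteratedDeriv_succ' ..
        rw [← this, Nat.factorial_succ]
        have h1 : ((i + 1 : ℕ) : ℝ) ≠ 0 := by positivity
        have h2 : ((i.factorial : ℕ) : ℝ) ≠ 0 := Nat.cast_ne_zero.2 i.factorial_ne_zero
        field_simp
        rw [Nat.add_sub_cancel]; push_cast
        ring
      rw [hre]
    have hRt : R t = 0 := by
      rw [hR]
      simp only [Finset.sum_range_succ']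
      simp [iteratedDeriv_zero]
    have hrcont : Continuous r := by
      apply (hf'.2.continuous).sub
      exact continuous_finset_sum _ fun i _ =>
        (continuous_const.mul ((continuous_id.sub continuous_const).pow i))
    have hRx : R x = ∫ s in t..x, r s := by
      rw [intervalIntegral.integral_eq_sub_of_hasDerivAt (fun s _ => hderiv s)
        (hrcont.intervalIntegrable _ _), hRt, sub_zero]
    have hb : ∀ s, |r s| ≤ L / (k + 1).factorial * |s - t| ^ (k + 1) := fun s => IH s
    have key := my_integral_bound r hrcont t x (L / (k + 1).factorial)
      (by positivity) (k + 1) hb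
    rw [← hRx] at key
    have hfac : ((k + 1 + 1).factorial : ℝ) = ((k : ℝ) + 1 + 1) * (k + 1).factorial := by
      rw [Nat.factorial_succ]; push_cast; ring
    have h2 : ((k + 1).factorial : ℝ) ≠ 0 := Nat.cast_ne_zero.2 (k + 1).factorial_ne_zero
    have h3 : ((k : ℝ) + 1 + 1) ≠ 0 := by positivity
    calc |R x| ≤ L / (k + 1).factorial * |x - t| ^ (k + 1 + 1) / ((k : ℝ) + 1 + 1) := by
          convert key using 2
          push_cast; ring
      _ = L / (k + 1 + 1).factorial * |x - t| ^ (k + 1 + 1) := by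
          rw [hfac, mul_comm ((k : ℝ) + 1 + 1), ← div_div]
          ring

-- helper 3: integrability of K times a continuous function
lemma my_integrable_K_mul (A B C : ℝ) (K : ℝ → ℝ) (hK_meas : Measurable K)
    (hC : ∀ u, |K u| ≤ C) (hK_supp : ∀ u, u ∉ Icc A B → K u = 0)
    (h : ℝ → ℝ) (hh : Continuous h) : Integrable (fun u => K u * h u) := by
  obtain ⟨D, hD⟩ := (isCompact_Icc (a := A) (b := B)).exists_bound_of_continuousOn
    hh.continuousOn
  have hmeas : Measurable fun u => K u * h u := hK_meas.mul hh.measurable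
  have heq : (fun u => K u * h u) = (Icc A B).indicator (fun u => K u * h u) := by
    funext u
    by_cases hu : u ∈ Icc A B
    · rw [Set.indicator_of_mem hu]
    · rw [Set.indicator_of_notMem hu, hK_supp u hu, zero_mul]
  rw [heq]
  apply MeasureTheory.IntegrableOn.integrable_indicator _ measurableSet_Icc
  apply MeasureTheory.Integrable.mono' (g := fun _ => C * D)
  · exact MeasureTheory.integrableOn_const measure_Icc_lt_top.ne
  · exact hmeas.aestronglyMeasurable.restrict
  · filter_upwards [MeasureTheory.ae_restrict_mem measurableSet_Icc] with u hu
    have : ‖K u * h u‖ = |K u| * |h u| := abs_mul _ _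
    rw [this]
    exact mul_le_mul (hC u) (hD u hu) (abs_nonneg _) ((abs_nonneg _).trans (hC u))


/-- Quantitative bias bound for a kernel of order `k` applied to a function
whose `k`-th derivative is Lipschitz with constant `L'`. -/
theorem kernel_bias_bound_lipschitz
    (A B L' : ℝ) (k : ℕ) (t φ : ℝ) (hφ : 0 < φ) (hL' : 0 ≤ L')
    (K J : ℝ → ℝ) (hK_meas : Measurable K)
    (hK_bdd : ∃ C, ∀ u, |K u| ≤ C)
    (hK_supp : ∀ u, u ∉ Icc A B → K u = 0)
    (hK_int : (∫ u, K u) = 1)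
    (hK_mom : ∀ j ∈ Finset.Icc 1 k, (∫ u, u ^ j * K u) = 0)
    (hJ : ContDiff ℝ k J)
    (hJlip : ∀ s s' : ℝ, |iteratedDeriv k J s - iteratedDeriv k J s'| ≤ L' * |s - s'|) :
    |∫ u, K u * (J (t + φ * u) - J t)|
      ≤ (L' / k.factorial) * φ ^ (k + 1) * ∫ u, |K u * u ^ (k + 1)| := by

  obtain ⟨C, hC⟩ := hK_bdd
  set c : ℕ → ℝ := fun j => iteratedDeriv j J t / j.factorial with hc
  set g : ℝ → ℝ := fun u =>
    J (t + φ * u) - ∑ j ∈ Finset.range (k + 1), c j * (φ * u) ^ j with hg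
  -- Taylor bound pointwise
  have htay : ∀ u : ℝ, |g u| ≤ L' / (k + 1).factorial * (φ * |u|) ^ (k + 1) := by
    intro u
    have := my_taylor_lip L' hL' k J hJ hJlip t (t + φ * u)
    simp only [add_sub_cancel_left] at this
    calc |g u| ≤ L' / (k + 1).factorial * |φ * u| ^ (k + 1) := this
      _ = L' / (k + 1).factorial * (φ * |u|) ^ (k + 1) := by
          rw [abs_mul, abs_of_pos hφ]
  -- continuity of g
  have hgcont : Continuous g := by
    apply ((hJ.continuous).comp (continuous_const.add (continuous_const.mul continuous_id))).sub
    exact continuous_finset_sum _ fun j _ =>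
      continuous_const.mul ((continuous_const.mul continuous_id).pow j)
  -- integrabilities
  have hint_g : Integrable fun u => K u * g u :=
    my_integrable_K_mul A B C K hK_meas hC hK_supp g hgcont
  have hint_pow : ∀ m : ℕ, Integrable fun u => K u * u ^ m := fun m =>
    my_integrable_K_mul A B C K hK_meas hC hK_supp _ (continuous_pow m)
  have hint_abs : Integrable fun u => |K u * u ^ (k + 1)| := (hint_pow (k + 1)).abs
  -- pointwise decomposition
  have hdecomp : ∀ u : ℝ, K u * (J (t + φ * u) - J t)
      = K u * g u + ∑ i ∈ Finset.range k, (c (i + 1) * φ ^ (i + 1)) * (u ^ (i + 1) * K u) := by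
    intro u
    have hsum : ∑ j ∈ Finset.range (k + 1), c j * (φ * u) ^ j
        = (∑ i ∈ Finset.range k, c (i + 1) * (φ * u) ^ (i + 1)) + c 0 := by
      rw [Finset.sum_range_succ']
      simp
    have hc0 : c 0 = J t := by simp [hc, iteratedDeriv_zero]
    rw [hg]
    simp only
    rw [hsum, hc0]
    have hre : ∑ i ∈ Finset.range k, (c (i + 1) * φ ^ (i + 1)) * (u ^ (i + 1) * K u)
        = K u * ∑ i ∈ Finset.range k, c (i + 1) * (φ * u) ^ (i + 1) := by
      rw [Finset.mul_sum]
      apply Finset.sum_congr rfl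
      intro i _
      rw [mul_pow]
      ring
    rw [hre]
    ring
  -- integral decomposition
  have hI : ∫ u, K u * (J (t + φ * u) - J t) = ∫ u, K u * g u := by
    have h1 : ∫ u, K u * (J (t + φ * u) - J t)
        = ∫ u, (K u * g u + ∑ i ∈ Finset.range k, (c (i + 1) * φ ^ (i + 1)) * (u ^ (i + 1) * K u)) := by
      congr 1; funext u; exact hdecomp u
    rw [h1, MeasureTheory.integral_add hint_g]
    · have h2 : ∫ u, ∑ i ∈ Finset.range k, (c (i + 1) * φ ^ (i + 1)) * (u ^ (i + 1) * K u) = 0 := by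
        rw [MeasureTheory.integral_finset_sum]
        · apply Finset.sum_eq_zero
          intro i hi
          rw [MeasureTheory.integral_const_mul]
          have : (∫ u, u ^ (i + 1) * K u) = 0 := by
            apply hK_mom
            simp only [Finset.mem_Icc]
            exact ⟨Nat.succ_le_succ (Nat.zero_le i), Nat.succ_le_of_lt (Finset.mem_range.1 hi)⟩
          rw [this, mul_zero]
        · intro i _x
          apply MeasureTheory.Integrable.const_mul
          have : (fun u : ℝ => u ^ (i + 1) * K u) = fun u => K u * u ^ (i + 1) := by
            funext u; ring
          rw [this]; exact hint_pow (i + 1)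
      rw [h2, add_zero]
    · apply MeasureTheory.integrable_finset_sum
      intro i _
      apply MeasureTheory.Integrable.const_mul
      have : (fun u : ℝ => u ^ (i + 1) * K u) = fun u => K u * u ^ (i + 1) := by
        funext u; ring
      rw [this]; exact hint_pow (i + 1)
  rw [hI]
  -- final estimate
  have hbound : ∀ u : ℝ, |K u * g u|
      ≤ (L' / k.factorial) * φ ^ (k + 1) * |K u * u ^ (k + 1)| := by
    intro u
    rw [abs_mul, abs_mul, abs_pow]
    calc |K u| * |g u| ≤ |K u| * (L' / (k + 1).factorial * (φ * |u|) ^ (k + 1)) :=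
          mul_le_mul_of_nonneg_left (htay u) (abs_nonneg _)
      _ ≤ |K u| * (L' / k.factorial * (φ * |u|) ^ (k + 1)) := by
          apply mul_le_mul_of_nonneg_left _ (abs_nonneg _)
          apply mul_le_mul_of_nonneg_right _ (by positivity)
          apply div_le_div_of_nonneg_left hL' (by positivity)
          exact_mod_cast Nat.factorial_le (Nat.le_succ k)
      _ = L' / k.factorial * φ ^ (k + 1) * (|K u| * |u| ^ (k + 1)) := by
          rw [mul_pow]; ring
  calc |∫ u, K u * g u| ≤ ∫ u, |K u * g u| := by
        exact MeasureTheory.norm_integral_le_integral_norm (fun u => K u * g u)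
    _ ≤ ∫ u, (L' / k.factorial) * φ ^ (k + 1) * |K u * u ^ (k + 1)| := by
        apply MeasureTheory.integral_mono hint_g.abs (hint_abs.const_mul _)
        exact hbound
    _ = (L' / k.factorial) * φ ^ (k + 1) * ∫ u, |K u * u ^ (k + 1)| :=
        MeasureTheory.integral_const_mul _ _
end
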